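/- arXiv:1112.0813 — 5 statements merged into one kernel-verified Lean document; each statement's English description precedes it below -/
import Mathlib

section
/- Let g : ℝ → ℝ be continuously differentiable with g' ∈ L²(ℝ). Define for ξ ≠ ξ̃ the difference quotient c(ξ, ξ̃) = (g(ξ) - g(ξ̃))/(ξ - ξ̃). Then for every ξ ∈ ℝ, the L² norm of c(ξ, ·) with respect to ξ̃ satisfies (∫_ℝ c(ξ, ξ̃)² dξ̃)^{1/2} ≤ 2 ‖g'‖_{L²}. -/
open MeasureTheory
open scoped ENNReal

/-- Affine change of variables for the Lebesgue integral on ℝ. -/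
lemma lintegral_comp_affine (φ : ℝ → ℝ≥0∞) (hφ : Measurable φ) {a : ℝ} (ha : a ≠ 0) (b : ℝ) :
    ∫⁻ x : ℝ, φ (a * x + b) = ENNReal.ofReal |a|⁻¹ * ∫⁻ y : ℝ, φ y := by
  have hm : Measurable fun y : ℝ => φ (y + b) := hφ.comp (measurable_add_const b)
  have h1 : ∫⁻ y : ℝ, φ (y + b) ∂(Measure.map (fun x : ℝ => a * x) volume)
      = ∫⁻ x : ℝ, φ (a * x + b) := by
    rw [lintegral_map hm (measurable_const_mul a)]
  rw [← h1, Real.map_volume_mul_left ha, lintegral_smul_measure,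
    lintegral_add_right_eq_self (fun y => φ y) b, abs_inv, smul_eq_mul]

lemma sqrt_inv_intervalIntegrable :
    IntervalIntegrable (fun u : ℝ => (Real.sqrt u)⁻¹) volume 0 1 := by
  rw [intervalIntegrable_iff]
  refine IntegrableOn.congr_fun (f := fun u : ℝ => u ^ (-(1/2) : ℝ))
    (intervalIntegrable_iff.mp (intervalIntegral.intervalIntegrable_rpow' (by norm_num)))
    ?_ measurableSet_uIoc
  intro u hu
  rw [Set.uIoc_of_le (by norm_num : (0:ℝ) ≤ 1)] at hu
  show u ^ (-(1/2) : ℝ) = (Real.sqrt u)⁻¹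
  rw [Real.rpow_neg hu.1.le, ← Real.sqrt_eq_rpow]

lemma sqrt_inv_integral : ∫ u in (0:ℝ)..1, (Real.sqrt u)⁻¹ = 2 := by
  have hcongr : ∀ u ∈ Set.uIcc (0:ℝ) 1, (Real.sqrt u)⁻¹ = u ^ (-(1/2) : ℝ) := by
    intro u hu
    rw [Set.uIcc_of_le (by norm_num : (0:ℝ) ≤ 1)] at hu
    rw [Real.rpow_neg hu.1, ← Real.sqrt_eq_rpow]
  rw [intervalIntegral.integral_congr hcongr, integral_rpow (Or.inl (by norm_num))]
  norm_num [Real.zero_rpow, Real.one_rpow]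

lemma sqrt_one_sub_inv_integrable :
    IntegrableOn (fun r : ℝ => (Real.sqrt (1 - r))⁻¹) (Set.Ioo (0:ℝ) 1) := by
  have h2 : IntervalIntegrable (fun r : ℝ => (Real.sqrt (1 - r))⁻¹) volume 0 1 := by
    simpa using (sqrt_inv_intervalIntegrable.comp_sub_left 1).symm
  rw [intervalIntegrable_iff, Set.uIoc_of_le (by norm_num : (0:ℝ) ≤ 1)] at h2
  exact h2.mono_set Set.Ioo_subset_Ioc_self

lemma sqrt_one_sub_inv_integral :
    ∫ r in Set.Ioo (0:ℝ) 1, (Real.sqrt (1 - r))⁻¹ = 2 := by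
  rw [← integral_Ioc_eq_integral_Ioo,
    ← intervalIntegral.integral_of_le (by norm_num : (0:ℝ) ≤ 1)]
  have := intervalIntegral.integral_comp_sub_left (a := 0) (b := 1)
    (fun u => (Real.sqrt u)⁻¹) 1
  norm_num at this
  rw [this, sqrt_inv_integral]

theorem diff_quotient_L2_bound
    (g : ℝ → ℝ) (hg : ContDiff ℝ 1 g)
    (hg' : Integrable (fun z => (deriv g z) ^ 2)) :
    ∀ ξ : ℝ,
      Real.sqrt (∫ t : ℝ, ((g ξ - g t) / (ξ - t)) ^ 2) ≤
        2 * Real.sqrt (∫ z : ℝ, (deriv g z) ^ 2) := by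
  intro ξ
  have hφc : Continuous (deriv g) := hg.continuous_deriv le_rfl
  have hgd : Differentiable ℝ g := hg.differentiable one_ne_zero
  set φ : ℝ → ℝ := deriv g with hφ
  set I : ℝ := ∫ z : ℝ, φ z ^ 2 with hIdef
  have hI0 : (0:ℝ) ≤ I := integral_nonneg fun z => sq_nonneg _
  -- main estimate
  have key : ∫ t : ℝ, ((g ξ - g t) / (ξ - t)) ^ 2 ≤ 4 * I := by
    set F : ℝ → ℝ → ℝ := fun t r => φ ((ξ - t) * r + t) with hFdef
    have hmeas : AEStronglyMeasurable (fun t : ℝ => ((g ξ - g t) / (ξ - t)) ^ 2) volume :=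
      (((measurable_const.sub hg.continuous.measurable).div
        (measurable_const.sub measurable_id)).pow_const 2).aestronglyMeasurable
    rw [integral_eq_lintegral_of_nonneg_ae (ae_of_all _ fun t => sq_nonneg _) hmeas]
    apply ENNReal.toReal_le_of_le_ofReal (by positivity)
    have hne : ∀ᵐ t : ℝ, t ≠ ξ := by
      rw [ae_iff]
      have : {t : ℝ | ¬ t ≠ ξ} = {ξ} := by ext; simp
      rw [this]
      exact Real.volume_singleton
    have hae : ∀ᵐ t : ℝ, ENNReal.ofReal (((g ξ - g t) / (ξ - t)) ^ 2)
        ≤ 2 * ∫⁻ r in Set.Ioo (0:ℝ) 1, ENNReal.ofReal (F t r ^ 2 * Real.sqrt (1 - r)) := by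
      filter_upwards [hne] with t ht
      have hsub : ξ - t ≠ 0 := sub_ne_zero.2 (Ne.symm ht)
      have hFc : Continuous (F t) := hφc.comp (by fun_prop)
      -- representation of the difference quotient
      have hrep : (g ξ - g t) / (ξ - t) = ∫ r in Set.Ioo (0:ℝ) 1, F t r := by
        have hfund : ∫ u in t..ξ, φ u = g ξ - g t :=
          intervalIntegral.integral_deriv_eq_sub (fun x _ => (hgd x))
            (hφc.intervalIntegrable t ξ)
        have hcomp := intervalIntegral.integral_comp_mul_add (a := (0:ℝ)) (b := 1)
          (f := φ) (c := ξ - t) hsub t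
        have e1 : (ξ - t) * 0 + t = t := by ring
        have e2 : (ξ - t) * 1 + t = ξ := by ring
        rw [e1, e2, hfund, smul_eq_mul] at hcomp
        rw [div_eq_inv_mul, ← hcomp, intervalIntegral.integral_of_le zero_le_one,
          integral_Ioc_eq_integral_Ioo]
      set A : ℝ := ∫ r in Set.Ioo (0:ℝ) 1, F t r ^ 2 * Real.sqrt (1 - r) with hAdef
      have hAcont : Continuous fun r : ℝ => F t r ^ 2 * Real.sqrt (1 - r) :=
        (hFc.pow 2).mul (Real.continuous_sqrt.comp (by fun_prop))
      have hAint : IntegrableOn (fun r => F t r ^ 2 * Real.sqrt (1 - r)) (Set.Ioo (0:ℝ) 1) :=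
        (hAcont.integrableOn_Icc (a := 0) (b := 1)).mono_set Set.Ioo_subset_Icc_self
      have hA0 : 0 ≤ A := setIntegral_nonneg measurableSet_Ioo
        fun r _ => mul_nonneg (sq_nonneg _) (Real.sqrt_nonneg _)
      have habs : |∫ r in Set.Ioo (0:ℝ) 1, F t r| ≤ Real.sqrt A * Real.sqrt 2 := by
        set μ := volume.restrict (Set.Ioo (0:ℝ) 1) with hμ
        haveI : IsFiniteMeasure μ := ⟨by rw [hμ, Measure.restrict_apply_univ]; simp [Real.volume_Ioo]⟩
        set f₁ : ℝ → ℝ := fun r => |F t r| * Real.sqrt (Real.sqrt (1 - r)) with hf₁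
        set g₁ : ℝ → ℝ := fun r => (Real.sqrt (Real.sqrt (1 - r)))⁻¹ with hg₁
        have hf₁sq : ∀ r, f₁ r ^ 2 = F t r ^ 2 * Real.sqrt (1 - r) := fun r => by
          rw [hf₁]; dsimp only; rw [mul_pow, sq_abs, Real.sq_sqrt (Real.sqrt_nonneg _)]
        have hg₁sq : ∀ r, g₁ r ^ 2 = (Real.sqrt (1 - r))⁻¹ := fun r => by
          rw [hg₁]; dsimp only; rw [inv_pow, Real.sq_sqrt (Real.sqrt_nonneg _)]
        have hrp : ∀ x : ℝ, 0 ≤ x → x ^ (2:ℝ) = x ^ 2 := fun x hx => by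
          rw [show (2:ℝ) = ((2:ℕ):ℝ) by norm_num, Real.rpow_natCast]
        have hf₁c : Continuous f₁ :=
          hFc.abs.mul (Real.continuous_sqrt.comp (Real.continuous_sqrt.comp
            (continuous_const.sub continuous_id)))
        have hg₁meas : Measurable g₁ :=
          (Real.continuous_sqrt.comp (Real.continuous_sqrt.comp
            (continuous_const.sub continuous_id))).measurable.inv
        have hf₁m : MemLp f₁ (ENNReal.ofReal 2) μ := by
          rw [show ENNReal.ofReal (2:ℝ) = 2 by norm_num]
          rw [memLp_two_iff_integrable_sq hf₁c.aestronglyMeasurable]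
          have : (fun r => f₁ r ^ 2) = fun r => F t r ^ 2 * Real.sqrt (1 - r) := funext hf₁sq
          rw [this, hμ]; exact hAint
        have hg₁m : MemLp g₁ (ENNReal.ofReal 2) μ := by
          rw [show ENNReal.ofReal (2:ℝ) = 2 by norm_num]
          rw [memLp_two_iff_integrable_sq hg₁meas.aestronglyMeasurable]
          have : (fun r => g₁ r ^ 2) = fun r => (Real.sqrt (1 - r))⁻¹ := funext hg₁sq
          rw [this, hμ]; exact sqrt_one_sub_inv_integrable
        have hpq : Real.HolderConjugate 2 2 := Real.HolderConjugate.two_two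
        have hCS := integral_mul_le_Lp_mul_Lq_of_nonneg (μ := μ) hpq
          (ae_of_all _ fun r => mul_nonneg (abs_nonneg _) (Real.sqrt_nonneg _))
          (ae_of_all _ fun r => inv_nonneg.2 (Real.sqrt_nonneg _)) hf₁m hg₁m
        have hL : ∫ r, f₁ r * g₁ r ∂μ = ∫ r in Set.Ioo (0:ℝ) 1, |F t r| := by
          rw [hμ]
          refine setIntegral_congr_fun measurableSet_Ioo fun r hr => ?_
          have h1r : (0:ℝ) < 1 - r := by linarith [hr.2]
          have hs : Real.sqrt (Real.sqrt (1 - r)) ≠ 0 := by positivity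
          rw [hf₁, hg₁]; dsimp only
          rw [mul_assoc, mul_inv_cancel₀ hs, mul_one]
        have hR1 : ∫ r, f₁ r ^ (2:ℝ) ∂μ = A := by
          have : (fun r => f₁ r ^ (2:ℝ)) = fun r => F t r ^ 2 * Real.sqrt (1 - r) :=
            funext fun r => by
              rw [hrp _ (mul_nonneg (abs_nonneg _) (Real.sqrt_nonneg _)), hf₁sq]
          rw [this, hAdef, hμ]
        have hR2 : ∫ r, g₁ r ^ (2:ℝ) ∂μ = 2 := by
          have : (fun r => g₁ r ^ (2:ℝ)) = fun r => (Real.sqrt (1 - r))⁻¹ :=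
            funext fun r => by
              rw [hrp _ (inv_nonneg.2 (Real.sqrt_nonneg _)), hg₁sq]
          rw [this, hμ]; exact sqrt_one_sub_inv_integral
        calc |∫ r in Set.Ioo (0:ℝ) 1, F t r|
            ≤ ∫ r in Set.Ioo (0:ℝ) 1, |F t r| := by
              simpa [Real.norm_eq_abs] using
                norm_integral_le_integral_norm (μ := volume.restrict (Set.Ioo (0:ℝ) 1)) (F t)
          _ ≤ A ^ ((1:ℝ)/2) * (2:ℝ) ^ ((1:ℝ)/2) := by
              rw [← hL]
              have := hCS; rw [hR1, hR2] at this
              simpa using this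
          _ = Real.sqrt A * Real.sqrt 2 := by
              rw [← Real.sqrt_eq_rpow, ← Real.sqrt_eq_rpow]
      have hsq : ((g ξ - g t) / (ξ - t)) ^ 2 ≤ 2 * A := by
        rw [hrep, ← sq_abs]
        calc |∫ r in Set.Ioo (0:ℝ) 1, F t r| ^ 2
            ≤ (Real.sqrt A * Real.sqrt 2) ^ 2 :=
              pow_le_pow_left₀ (abs_nonneg _) habs 2
          _ = A * 2 := by
              rw [mul_pow, Real.sq_sqrt hA0, Real.sq_sqrt (by norm_num : (0:ℝ) ≤ 2)]
          _ = 2 * A := mul_comm _ _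
      calc ENNReal.ofReal (((g ξ - g t) / (ξ - t)) ^ 2)
          ≤ ENNReal.ofReal (2 * A) := ENNReal.ofReal_le_ofReal hsq
        _ = 2 * ENNReal.ofReal A := by
            rw [ENNReal.ofReal_mul (by norm_num : (0:ℝ) ≤ 2)]
            norm_num
        _ = 2 * ∫⁻ r in Set.Ioo (0:ℝ) 1, ENNReal.ofReal (F t r ^ 2 * Real.sqrt (1 - r)) := by
            rw [hAdef, ofReal_integral_eq_lintegral_ofReal hAint
              (ae_of_all _ fun r => mul_nonneg (sq_nonneg _) (Real.sqrt_nonneg _))]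
    -- Tonelli and the change of variables
    have hprodmeas : AEMeasurable
        (Function.uncurry fun t r => ENNReal.ofReal (F t r ^ 2 * Real.sqrt (1 - r)))
        (volume.prod (volume.restrict (Set.Ioo (0:ℝ) 1))) := by
      have hc2 : Continuous fun p : ℝ × ℝ => F p.1 p.2 ^ 2 * Real.sqrt (1 - p.2) :=
        ((hφc.comp (by fun_prop)).pow 2).mul (Real.continuous_sqrt.comp (by fun_prop))
      exact (hc2.measurable.ennreal_ofReal).aemeasurable
    calc ∫⁻ t : ℝ, ENNReal.ofReal (((g ξ - g t) / (ξ - t)) ^ 2)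
        ≤ ∫⁻ t : ℝ, 2 * ∫⁻ r in Set.Ioo (0:ℝ) 1,
            ENNReal.ofReal (F t r ^ 2 * Real.sqrt (1 - r)) := lintegral_mono_ae hae
      _ = 2 * ∫⁻ t : ℝ, ∫⁻ r in Set.Ioo (0:ℝ) 1,
            ENNReal.ofReal (F t r ^ 2 * Real.sqrt (1 - r)) :=
          lintegral_const_mul' 2 _ ENNReal.ofNat_ne_top
      _ = 2 * ∫⁻ r in Set.Ioo (0:ℝ) 1, ∫⁻ t : ℝ,
            ENNReal.ofReal (F t r ^ 2 * Real.sqrt (1 - r)) := by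
          rw [lintegral_lintegral_swap hprodmeas]
      _ = 2 * ∫⁻ r in Set.Ioo (0:ℝ) 1,
            ENNReal.ofReal ((Real.sqrt (1 - r))⁻¹) * ENNReal.ofReal I := by
          congr 1
          refine setLIntegral_congr_fun measurableSet_Ioo (fun r hr => ?_)
          have h1r : (0:ℝ) < 1 - r := by linarith [hr.2]
          have e1 : ∀ t : ℝ, ENNReal.ofReal (F t r ^ 2 * Real.sqrt (1 - r))
              = ENNReal.ofReal (F t r ^ 2) * ENNReal.ofReal (Real.sqrt (1 - r)) :=
            fun t => ENNReal.ofReal_mul (sq_nonneg _)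
          simp only [e1]
          rw [lintegral_mul_const' _ _ ENNReal.ofReal_ne_top]
          have e2 : (fun t : ℝ => ENNReal.ofReal (F t r ^ 2))
              = fun t : ℝ => ENNReal.ofReal (φ ((1 - r) * t + r * ξ) ^ 2) := by
            funext t
            rw [hFdef]; dsimp only
            congr 2
            ring
          rw [e2, lintegral_comp_affine (fun y => ENNReal.ofReal (φ y ^ 2))
            ((hφc.measurable.pow_const 2).ennreal_ofReal) (by linarith : (1:ℝ) - r ≠ 0) (r * ξ)]
          have e4 : ∫⁻ y : ℝ, ENNReal.ofReal (φ y ^ 2) = ENNReal.ofReal I :=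
            (ofReal_integral_eq_lintegral_ofReal hg' (ae_of_all _ fun z => sq_nonneg _)).symm
          rw [e4, abs_of_pos h1r]
          have e5 : (1 - r)⁻¹ * Real.sqrt (1 - r) = (Real.sqrt (1 - r))⁻¹ := by
            refine eq_inv_of_mul_eq_one_left ?_
            rw [mul_assoc, Real.mul_self_sqrt h1r.le]
            exact inv_mul_cancel₀ (ne_of_gt h1r)
          rw [mul_comm (ENNReal.ofReal (1 - r)⁻¹) (ENNReal.ofReal I), mul_assoc,
            ← ENNReal.ofReal_mul (by positivity : (0:ℝ) ≤ (1 - r)⁻¹), e5,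
            mul_comm (ENNReal.ofReal I) _]
      _ = 2 * (ENNReal.ofReal 2 * ENNReal.ofReal I) := by
          rw [lintegral_mul_const' (ENNReal.ofReal I) _ ENNReal.ofReal_ne_top,
            ← ofReal_integral_eq_lintegral_ofReal sqrt_one_sub_inv_integrable
              (ae_of_all _ fun r => inv_nonneg.2 (Real.sqrt_nonneg _)),
            sqrt_one_sub_inv_integral]
      _ = ENNReal.ofReal (4 * I) := by
          rw [ENNReal.ofReal_mul (by norm_num : (0:ℝ) ≤ 4)]
          rw [show ENNReal.ofReal (2:ℝ) = 2 by norm_num,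
            show ENNReal.ofReal (4:ℝ) = 4 by norm_num]
          ring
  calc Real.sqrt (∫ t : ℝ, ((g ξ - g t) / (ξ - t)) ^ 2)
      ≤ Real.sqrt (4 * I) := Real.sqrt_le_sqrt key
    _ = 2 * Real.sqrt I := by
        rw [show (4:ℝ) = 2 ^ 2 by norm_num, Real.sqrt_mul (by positivity) I,
          Real.sqrt_sq (by norm_num : (0:ℝ) ≤ 2)]
end

section
/- Let g : ℝ → ℝ be twice continuously differentiable with g'' ∈ L²(ℝ). Define c(ξ, ξ̃) = (g(ξ) - g(ξ̃))/(ξ - ξ̃) and let c_ξ denote its partial derivative with respect to ξ, which equals (g'(ξ)·(ξ-ξ̃) - (g(ξ)-g(ξ̃)))/(ξ-ξ̃)². Then for every ξ ∈ ℝ, (∫_ℝ c_ξ(ξ, ξ̃)² dξ̃)^{1/2} ≤ (4/3) ‖g''‖_{L²}. -/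
open MeasureTheory Set

lemma enn_sq (x : ℝ) : (‖x‖₊ : ENNReal) ^ 2 = ENNReal.ofReal (x ^ 2) := by
  rw [← enorm_eq_nnnorm, Real.enorm_eq_ofReal_abs, ← ENNReal.ofReal_pow (abs_nonneg x), sq_abs]

lemma taylor_key (g : ℝ → ℝ) (hg : ContDiff ℝ 2 g) (ξ t : ℝ) (ht : t ≠ ξ) :
    (deriv g ξ * (ξ - t) - (g ξ - g t)) / (ξ - t) ^ 2
      = ∫ r in Set.Ioc (0:ℝ) 1, (1 - r) * deriv (deriv g) (ξ + r * (t - ξ)) := by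
  have h2 : ContDiff ℝ (1+1) g := by
    have h12 : ((1:WithTop ℕ∞)+1) = 2 := one_add_one_eq_two
    rw [h12]; exact hg
  have hd1 : Differentiable ℝ g := hg.differentiable two_ne_zero
  have hcd : ContDiff ℝ 1 (deriv g) := (contDiff_succ_iff_deriv.mp h2).2.2
  have hd2 : Differentiable ℝ (deriv g) := hcd.differentiable one_ne_zero
  have hc2 : Continuous (deriv (deriv g)) := hcd.continuous_deriv le_rfl
  set ψ : ℝ → ℝ := fun r => (1 - r) * (deriv g (ξ + r * (t - ξ)) * (t - ξ)) + g (ξ + r * (t - ξ)) with hψ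
  have hcaff : Continuous (fun r : ℝ => ξ + r * (t - ξ)) := by continuity
  have haff : ∀ r : ℝ, HasDerivAt (fun r : ℝ => ξ + r * (t - ξ)) (t - ξ) r := by
    intro r
    simpa using ((hasDerivAt_id r).mul_const (t - ξ)).const_add ξ
  have hderiv : ∀ r : ℝ, HasDerivAt ψ ((1 - r) * deriv (deriv g) (ξ + r * (t - ξ)) * (t - ξ)^2) r := by
    intro r
    have h1 : HasDerivAt (fun r : ℝ => g (ξ + r * (t - ξ))) (deriv g (ξ + r * (t - ξ)) * (t - ξ)) r :=
      (hd1 _).hasDerivAt.comp r (haff r)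
    have h2' : HasDerivAt (fun r : ℝ => deriv g (ξ + r * (t - ξ)))
        (deriv (deriv g) (ξ + r * (t - ξ)) * (t - ξ)) r :=
      (hd2 _).hasDerivAt.comp r (haff r)
    have h3 : HasDerivAt (fun r : ℝ => (1 - r)) (-1 : ℝ) r := by
      simpa using (hasDerivAt_id r).const_sub 1
    have h4 := (h3.mul (h2'.mul_const (t - ξ))).add h1
    refine (h4 : HasDerivAt ψ _ r).congr_deriv ?_
    ring
  have hcont : Continuous fun r : ℝ => (1 - r) * deriv (deriv g) (ξ + r * (t - ξ)) * (t - ξ)^2 :=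
    (((continuous_const.sub continuous_id).mul (hc2.comp hcaff)).mul continuous_const)
  have hint := intervalIntegral.integral_eq_sub_of_hasDerivAt (f := ψ)
      (fun r _ => hderiv r) (hcont.intervalIntegrable 0 1)
  have hψ1 : ψ 1 = g t := by simp [hψ]
  have hψ0 : ψ 0 = deriv g ξ * (t - ξ) + g ξ := by simp [hψ]
  rw [hψ1, hψ0] at hint
  have hIoc : ∫ r in Set.Ioc (0:ℝ) 1, (1 - r) * deriv (deriv g) (ξ + r * (t - ξ))
      = ∫ r in (0:ℝ)..1, (1 - r) * deriv (deriv g) (ξ + r * (t - ξ)) := by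
    rw [intervalIntegral.integral_of_le zero_le_one]
  rw [hIoc]
  have hne : ((ξ - t) : ℝ) ^ 2 ≠ 0 := pow_ne_zero _ (sub_ne_zero.mpr (Ne.symm ht))
  have hmul : (∫ r in (0:ℝ)..1, (1 - r) * deriv (deriv g) (ξ + r * (t - ξ))) * (t - ξ)^2
      = g t - (deriv g ξ * (t - ξ) + g ξ) := by
    rw [← hint, ← intervalIntegral.integral_mul_const]
  rw [div_eq_iff hne]
  linear_combination -hmul

lemma cov_int (h : ℝ → ℝ) (ξ r : ℝ) (hr : 0 < r) :
    ∫ t : ℝ, h (ξ + r * (t - ξ)) = r⁻¹ * ∫ z : ℝ, h z := by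
  have key : ∀ t : ℝ, ξ + r * (t - ξ) = r * (t + (ξ - r * ξ)/r) := by
    intro t; field_simp; ring
  have h1 := integral_add_right_eq_self (μ := volume) (fun s : ℝ => h (r * s)) ((ξ - r * ξ)/r)
  calc ∫ t : ℝ, h (ξ + r * (t - ξ)) = ∫ t : ℝ, h (r * (t + (ξ - r * ξ)/r)) := by
        simp_rw [key]
    _ = ∫ t : ℝ, h (r * t) := h1
    _ = r⁻¹ * ∫ z : ℝ, h z := by
        rw [MeasureTheory.Measure.integral_comp_mul_left h r, abs_of_nonneg (inv_nonneg.mpr hr.le),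
          smul_eq_mul]

lemma cov_integrable (h : ℝ → ℝ) (hh : Integrable h) (ξ r : ℝ) (hr : 0 < r) :
    Integrable (fun t : ℝ => h (ξ + r * (t - ξ))) := by
  have key : ∀ t : ℝ, ξ + r * (t - ξ) = r * (t + (ξ - r * ξ)/r) := by
    intro t; field_simp; ring
  simp_rw [key]
  exact (hh.comp_mul_left' hr.ne').comp_add_right _

lemma weight_eq : ∀ r ∈ Ioc (0:ℝ) 1, (1 - r)/Real.sqrt r = r ^ (-(1/2) : ℝ) - r ^ ((1/2) : ℝ) := by
  intro r hr
  have hr0 : 0 < r := hr.1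
  rw [Real.sqrt_eq_rpow]
  rw [div_eq_mul_inv, ← Real.rpow_neg hr0.le, sub_mul, one_mul]
  congr 1
  rw [← Real.rpow_one_add' hr0.le (by norm_num)]
  norm_num

lemma weight_integrableOn : IntegrableOn (fun r : ℝ => (1 - r)/Real.sqrt r) (Ioc 0 1) := by
  have h1 : IntervalIntegrable (fun r : ℝ => r ^ (-(1/2):ℝ) - r ^ ((1/2):ℝ)) volume 0 1 :=
    (intervalIntegral.intervalIntegrable_rpow' (by norm_num)).sub
      (intervalIntegral.intervalIntegrable_rpow' (by norm_num))
  have h2 : IntegrableOn (fun r : ℝ => r ^ (-(1/2):ℝ) - r ^ ((1/2):ℝ)) (Ioc 0 1) :=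
    (intervalIntegrable_iff_integrableOn_Ioc_of_le zero_le_one).mp h1
  exact h2.congr_fun (fun r hr => (weight_eq r hr).symm) measurableSet_Ioc

lemma weight_integral : ∫ r in Ioc (0:ℝ) 1, (1 - r)/Real.sqrt r = 4/3 := by
  rw [setIntegral_congr_fun measurableSet_Ioc weight_eq]
  rw [← intervalIntegral.integral_of_le zero_le_one]
  rw [intervalIntegral.integral_sub (intervalIntegral.intervalIntegrable_rpow' (by norm_num))
    (intervalIntegral.intervalIntegrable_rpow' (by norm_num))]
  rw [integral_rpow (Or.inl (by norm_num)), integral_rpow (Or.inl (by norm_num))]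
  norm_num

lemma cs_step (c : ℝ) (G : ℝ → ℝ) (hGm : Continuous G)
    (hc : c = ∫ r in Ioc (0:ℝ) 1, (1 - r) * G r) :
    ENNReal.ofReal (c ^ 2) ≤
      (∫⁻ r in Ioc (0:ℝ) 1, ENNReal.ofReal ((1 - r) / Real.sqrt r)) *
        ∫⁻ r in Ioc (0:ℝ) 1, ENNReal.ofReal ((1 - r) * Real.sqrt r * G r ^ 2) := by
  set f₁ : ℝ → ENNReal := fun r => ENNReal.ofReal (Real.sqrt ((1 - r) / Real.sqrt r)) with hf₁
  set f₂ : ℝ → ENNReal := fun r => ENNReal.ofReal (Real.sqrt ((1 - r) * Real.sqrt r) * |G r|) with hf₂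
  have hmeas₁ : AEMeasurable f₁ (volume.restrict (Ioc (0:ℝ) 1)) := by
    apply Measurable.aemeasurable
    exact (measurable_const.sub measurable_id).div
      (Real.continuous_sqrt.measurable) |>.sqrt.ennreal_ofReal
  have hmeas₂ : AEMeasurable f₂ (volume.restrict (Ioc (0:ℝ) 1)) := by
    apply Continuous.aemeasurable
    exact (ENNReal.continuous_ofReal.comp
      (((Real.continuous_sqrt.comp ((continuous_const.sub continuous_id).mul
        Real.continuous_sqrt))).mul hGm.abs))
  have hpq : (2:ℝ).HolderConjugate 2 := ⟨by norm_num, by norm_num, by norm_num⟩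
  have hstep1 : (‖c‖₊ : ENNReal) ≤ ∫⁻ r in Ioc (0:ℝ) 1, f₁ r * f₂ r := by
    rw [hc]
    refine le_trans (enorm_integral_le_lintegral_enorm _) (le_of_eq ?_)
    refine setLIntegral_congr_fun measurableSet_Ioc ?_
    intro r hr
    have ha : (0:ℝ) ≤ 1 - r := by linarith [hr.2]
    have hs : 0 < Real.sqrt r := Real.sqrt_pos.mpr hr.1
    have hkey : Real.sqrt ((1 - r) / Real.sqrt r) * Real.sqrt ((1 - r) * Real.sqrt r)
        = 1 - r := by
      rw [← Real.sqrt_mul (div_nonneg ha hs.le)]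
      have : (1 - r) / Real.sqrt r * ((1 - r) * Real.sqrt r) = (1 - r) ^ 2 := by
        field_simp
      rw [this, Real.sqrt_sq ha]
    rw [hf₁, hf₂]
    simp only []
    rw [← ENNReal.ofReal_mul (Real.sqrt_nonneg _), ← mul_assoc, hkey,
      Real.enorm_eq_ofReal_abs, abs_mul, abs_of_nonneg ha]
  have hstep2 := ENNReal.lintegral_mul_le_Lp_mul_Lq (volume.restrict (Ioc (0:ℝ) 1)) hpq hmeas₁ hmeas₂
  have hI1 : ∫⁻ r in Ioc (0:ℝ) 1, f₁ r ^ (2:ℝ)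
      = ∫⁻ r in Ioc (0:ℝ) 1, ENNReal.ofReal ((1 - r) / Real.sqrt r) := by
    refine setLIntegral_congr_fun measurableSet_Ioc ?_
    intro r hr
    have ha : (0:ℝ) ≤ 1 - r := by linarith [hr.2]
    have h0 : (0:ℝ) ≤ (1 - r) / Real.sqrt r := div_nonneg ha (Real.sqrt_nonneg _)
    rw [hf₁]
    simp only []
    rw [ENNReal.ofReal_rpow_of_nonneg (Real.sqrt_nonneg _) (by norm_num : (0:ℝ) ≤ 2)]
    congr 1
    rw [show (2:ℝ) = ((2:ℕ):ℝ) by norm_num, Real.rpow_natCast, Real.sq_sqrt h0]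
  have hI2 : ∫⁻ r in Ioc (0:ℝ) 1, f₂ r ^ (2:ℝ)
      = ∫⁻ r in Ioc (0:ℝ) 1, ENNReal.ofReal ((1 - r) * Real.sqrt r * G r ^ 2) := by
    refine setLIntegral_congr_fun measurableSet_Ioc ?_
    intro r hr
    have ha : (0:ℝ) ≤ 1 - r := by linarith [hr.2]
    have h0 : (0:ℝ) ≤ (1 - r) * Real.sqrt r := mul_nonneg ha (Real.sqrt_nonneg _)
    rw [hf₂]
    simp only []
    rw [ENNReal.ofReal_rpow_of_nonneg (mul_nonneg (Real.sqrt_nonneg _) (abs_nonneg _)) (by norm_num : (0:ℝ) ≤ 2)]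
    congr 1
    rw [show (2:ℝ) = ((2:ℕ):ℝ) by norm_num, Real.rpow_natCast, mul_pow, Real.sq_sqrt h0, sq_abs]
  rw [hI1, hI2] at hstep2
  calc ENNReal.ofReal (c ^ 2) = (‖c‖₊ : ENNReal) ^ 2 := (enn_sq c).symm
    _ ≤ ((∫⁻ r in Ioc (0:ℝ) 1, ENNReal.ofReal ((1 - r) / Real.sqrt r)) ^ ((1:ℝ)/2) *
        (∫⁻ r in Ioc (0:ℝ) 1, ENNReal.ofReal ((1 - r) * Real.sqrt r * G r ^ 2)) ^ ((1:ℝ)/2)) ^ 2 := by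
        exact pow_le_pow_left' (hstep1.trans hstep2) 2
    _ = _ := by
        rw [mul_pow, ← ENNReal.rpow_natCast (_ ^ ((1:ℝ)/2)) 2, ← ENNReal.rpow_natCast (_ ^ ((1:ℝ)/2)) 2,
          ← ENNReal.rpow_mul, ← ENNReal.rpow_mul]
        norm_num

theorem diff_quotient_deriv_L2_bound
    (g : ℝ → ℝ) (hg : ContDiff ℝ 2 g)
    (hg'' : Integrable (fun z => (deriv (deriv g) z) ^ 2)) :
    ∀ ξ : ℝ,
      Real.sqrt (∫ t : ℝ,
          ((deriv g ξ * (ξ - t) - (g ξ - g t)) / (ξ - t) ^ 2) ^ 2) ≤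
        (4 / 3) * Real.sqrt (∫ z : ℝ, (deriv (deriv g) z) ^ 2) := by
  intro ξ
  set dd : ℝ → ℝ := deriv (deriv g) with hdd
  have h2 : ContDiff ℝ (1+1) g := by
    have h12 : ((1:WithTop ℕ∞)+1) = 2 := one_add_one_eq_two
    rw [h12]; exact hg
  have hcd : ContDiff ℝ 1 (deriv g) := (contDiff_succ_iff_deriv.mp h2).2.2
  have hc2 : Continuous dd := hcd.continuous_deriv le_rfl
  set B : ℝ := ∫ z : ℝ, dd z ^ 2 with hB
  have hB0 : 0 ≤ B := integral_nonneg fun z => sq_nonneg _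
  set c : ℝ → ℝ := fun t => (deriv g ξ * (ξ - t) - (g ξ - g t)) / (ξ - t) ^ 2 with hcdef
  have hmc : Measurable c := by
    have hgc : Continuous g := hg.continuous
    exact (((continuous_const.mul (continuous_const.sub continuous_id)).sub
      (continuous_const.sub hgc)).measurable).div
      (((continuous_const.sub continuous_id).pow 2).measurable)
  set K : ℝ → ENNReal := fun t =>
    ∫⁻ r in Ioc (0:ℝ) 1, ENNReal.ofReal ((1 - r) * Real.sqrt r * dd (ξ + r * (t - ξ)) ^ 2) with hK
  have hI1enn : (∫⁻ r in Ioc (0:ℝ) 1, ENNReal.ofReal ((1 - r) / Real.sqrt r))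
      = ENNReal.ofReal (4/3) := by
    rw [← weight_integral]
    refine (ofReal_integral_eq_lintegral_ofReal weight_integrableOn ?_).symm
    refine (ae_restrict_iff' measurableSet_Ioc).mpr (Filter.Eventually.of_forall ?_)
    intro r hr
    exact div_nonneg (by linarith [hr.2]) (Real.sqrt_nonneg _)
  have hae : ∀ᵐ t : ℝ, t ≠ ξ := by
    rw [ae_iff]
    have : {a : ℝ | ¬a ≠ ξ} = {ξ} := by ext a; simp
    rw [this]
    exact measure_singleton ξ
  -- pointwise Cauchy-Schwarz bound
  have hptwise : ∀ᵐ t : ℝ, ENNReal.ofReal (c t ^ 2) ≤ ENNReal.ofReal (4/3) * K t := by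
    filter_upwards [hae] with t ht
    have hcs := cs_step (c t) (fun r => dd (ξ + r * (t - ξ)))
      (hc2.comp (by continuity)) (taylor_key g hg ξ t ht)
    rw [hI1enn] at hcs
    exact hcs
  have hswap : ∫⁻ t : ℝ, K t
      = ∫⁻ r in Ioc (0:ℝ) 1, ∫⁻ t : ℝ,
          ENNReal.ofReal ((1 - r) * Real.sqrt r * dd (ξ + r * (t - ξ)) ^ 2) := by
    refine lintegral_lintegral_swap ?_
    apply Continuous.aemeasurable
    exact ENNReal.continuous_ofReal.comp
      ((((continuous_const.sub continuous_snd).mul (Real.continuous_sqrt.comp continuous_snd)).mul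
        ((hc2.comp (by continuity)).pow 2)))
  have hinner : ∀ r ∈ Ioc (0:ℝ) 1,
      (∫⁻ t : ℝ, ENNReal.ofReal ((1 - r) * Real.sqrt r * dd (ξ + r * (t - ξ)) ^ 2))
        = ENNReal.ofReal ((1 - r) / Real.sqrt r) * ENNReal.ofReal B := by
    intro r hr
    have hr0 : 0 < r := hr.1
    have ha : (0:ℝ) ≤ 1 - r := by linarith [hr.2]
    have hs : 0 < Real.sqrt r := Real.sqrt_pos.mpr hr0
    have hk0 : (0:ℝ) ≤ (1 - r) * Real.sqrt r := mul_nonneg ha hs.le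
    have heq1 : ∀ t : ℝ, ENNReal.ofReal ((1 - r) * Real.sqrt r * dd (ξ + r * (t - ξ)) ^ 2)
        = ENNReal.ofReal ((1 - r) * Real.sqrt r) * ENNReal.ofReal (dd (ξ + r * (t - ξ)) ^ 2) := by
      intro t; rw [← ENNReal.ofReal_mul hk0]
    simp_rw [heq1]
    rw [lintegral_const_mul' _ _ ENNReal.ofReal_ne_top]
    have hcov : (∫⁻ t : ℝ, ENNReal.ofReal (dd (ξ + r * (t - ξ)) ^ 2))
        = ENNReal.ofReal (r⁻¹ * B) := by
      rw [← cov_int (fun z => dd z ^ 2) ξ r hr0]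
      exact (ofReal_integral_eq_lintegral_ofReal
        (cov_integrable (fun z => dd z ^ 2) hg'' ξ r hr0)
        (Filter.Eventually.of_forall fun t => sq_nonneg _)).symm
    rw [hcov, ← ENNReal.ofReal_mul hk0, ← ENNReal.ofReal_mul (by positivity)]
    congr 1
    have hss : Real.sqrt r * Real.sqrt r = r := Real.mul_self_sqrt hr0.le
    have hrne : r ≠ 0 := hr0.ne'
    have hsne : Real.sqrt r ≠ 0 := hs.ne'
    field_simp
    linear_combination ((1 - r) * B) * hss
  -- main lintegral bound
  have hmain : (∫⁻ t : ℝ, ENNReal.ofReal (c t ^ 2))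
      ≤ ENNReal.ofReal (4/3) * (ENNReal.ofReal (4/3) * ENNReal.ofReal B) := by
    calc (∫⁻ t : ℝ, ENNReal.ofReal (c t ^ 2))
        ≤ ∫⁻ t : ℝ, ENNReal.ofReal (4/3) * K t := lintegral_mono_ae hptwise
      _ = ENNReal.ofReal (4/3) * ∫⁻ t : ℝ, K t := lintegral_const_mul' _ _ ENNReal.ofReal_ne_top
      _ = ENNReal.ofReal (4/3) * (ENNReal.ofReal (4/3) * ENNReal.ofReal B) := by
          rw [hswap]
          congr 1
          rw [setLIntegral_congr_fun measurableSet_Ioc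
            hinner]
          rw [lintegral_mul_const' _ _ ENNReal.ofReal_ne_top, hI1enn]
  have hfin : ENNReal.ofReal (4/3) * (ENNReal.ofReal (4/3) * ENNReal.ofReal B) ≠ ⊤ :=
    ENNReal.mul_ne_top ENNReal.ofReal_ne_top
      (ENNReal.mul_ne_top ENNReal.ofReal_ne_top ENNReal.ofReal_ne_top)
  have hint_eq : (∫ t : ℝ, c t ^ 2) = (∫⁻ t : ℝ, ENNReal.ofReal (c t ^ 2)).toReal := by
    rw [integral_eq_lintegral_of_nonneg_ae (Filter.Eventually.of_forall fun t => sq_nonneg _)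
      ((hmc.pow_const 2).aestronglyMeasurable)]
  have hle : (∫ t : ℝ, c t ^ 2) ≤ 4/3 * (4/3 * B) := by
    rw [hint_eq]
    calc (∫⁻ t : ℝ, ENNReal.ofReal (c t ^ 2)).toReal
        ≤ (ENNReal.ofReal (4/3) * (ENNReal.ofReal (4/3) * ENNReal.ofReal B)).toReal :=
          ENNReal.toReal_mono hfin hmain
      _ = 4/3 * (4/3 * B) := by
          rw [ENNReal.toReal_mul, ENNReal.toReal_mul,
            ENNReal.toReal_ofReal (show (0:ℝ) ≤ 4/3 by norm_num), ENNReal.toReal_ofReal hB0]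
  calc Real.sqrt (∫ t : ℝ, c t ^ 2) ≤ Real.sqrt (4/3 * (4/3 * B)) := Real.sqrt_le_sqrt hle
    _ = 4/3 * Real.sqrt B := by
        rw [show (4/3 : ℝ) * (4/3 * B) = (4/3)^2 * B by ring,
          Real.sqrt_mul (by positivity), Real.sqrt_sq (by norm_num)]
end

section
/- Let h₀ : ℝ → ℝ be continuously differentiable, vanishing at infinity, with ‖ε h₀'‖_{L∞} < 1. Then there exists a unique continuous function g₀ : ℝ → ℝ vanishing at infinity such that h₀(ξ - ε g₀(ξ)) = g₀(ξ) for all ξ ∈ ℝ. -/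
open Filter NNReal

theorem fixed_point_existence_uniqueness (ε : ℝ) (h₀ : ℝ → ℝ)
    (hC1 : ContDiff ℝ 1 h₀)
    (hvanish : Tendsto h₀ (cocompact ℝ) (nhds 0))
    (hsmall : ∃ K : ℝ, K < 1 ∧ ∀ x : ℝ, |ε * deriv h₀ x| ≤ K) :
    ∃! g₀ : ℝ → ℝ,
      Continuous g₀ ∧ Tendsto g₀ (cocompact ℝ) (nhds 0) ∧
      ∀ ξ : ℝ, h₀ (ξ - ε * g₀ ξ) = g₀ ξ := by
  obtain ⟨K, hK1, hKb⟩ := hsmall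
  rcases eq_or_ne ε 0 with rfl | hε
  · refine ⟨h₀, ⟨hC1.continuous, hvanish, fun ξ => by simp⟩, ?_⟩
    rintro g ⟨-, -, hg⟩
    funext ξ
    simpa using (hg ξ).symm
  · -- ε ≠ 0
    have hK0 : (0:ℝ) ≤ K := le_trans (abs_nonneg _) (hKb 0)
    have hdiff : Differentiable ℝ h₀ := hC1.differentiable one_ne_zero
    -- Lipschitz constant for h₀
    set L : ℝ≥0 := ⟨K / |ε|, div_nonneg hK0 (abs_nonneg _)⟩ with hL
    have hlip : LipschitzWith L h₀ := by
      apply lipschitzWith_of_nnnorm_deriv_le hdiff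
      intro x
      have : |deriv h₀ x| ≤ K / |ε| := by
        rw [le_div_iff₀ (abs_pos.mpr hε)]
        calc |deriv h₀ x| * |ε| = |ε * deriv h₀ x| := by rw [abs_mul]; ring
          _ ≤ K := hKb x
      exact this
    -- The map T on C₀(ℝ, ℝ)
    have hzero : ∀ g : ZeroAtInftyContinuousMap ℝ ℝ,
        Tendsto (fun ξ => h₀ (ξ - ε * g ξ)) (cocompact ℝ) (nhds 0) := by
      intro g
      apply hvanish.comp
      rw [← Metric.cobounded_eq_cocompact (α := ℝ), ← tendsto_norm_atTop_iff_cobounded]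
      have hb : ∀ᶠ ξ in Bornology.cobounded ℝ, ‖ξ‖ - 1 ≤ ‖ξ - ε * g ξ‖ := by
        have h1 : Tendsto (fun ξ => ε * g ξ) (Bornology.cobounded ℝ) (nhds 0) := by
          rw [Metric.cobounded_eq_cocompact]
          simpa using (g.zero_at_infty').const_mul ε
        filter_upwards [(h1.eventually (Metric.ball_mem_nhds 0 one_pos))] with ξ hξ
        have h2 : ‖ε * g ξ‖ ≤ 1 := le_of_lt (by simpa [Real.dist_eq] using hξ)
        have := norm_sub_norm_le ξ (ε * g ξ)
        linarith [this]
      refine tendsto_atTop_mono' _ hb ?_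
      rw [Metric.cobounded_eq_cocompact]
      exact (tendsto_norm_cocompact_atTop).atTop_add tendsto_const_nhds
    set T : ZeroAtInftyContinuousMap ℝ ℝ → ZeroAtInftyContinuousMap ℝ ℝ :=
      fun g => ⟨⟨fun ξ => h₀ (ξ - ε * g ξ),
        hC1.continuous.comp (continuous_id.sub (continuous_const.mul g.continuous))⟩,
        hzero g⟩ with hT
    have hKnn : (⟨K, hK0⟩ : ℝ≥0) < 1 := by
      exact NNReal.coe_lt_coe.mp hK1
    have hTlip : LipschitzWith ⟨K, hK0⟩ T := by
      apply LipschitzWith.of_dist_le_mul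
      intro g g'
      change dist (T g) (T g') ≤ K * dist g g'
      rw [← ZeroAtInftyContinuousMap.dist_toBCF_eq_dist]
      apply BoundedContinuousFunction.dist_le_iff_of_nonempty.mpr
      intro ξ
      have key : dist (h₀ (ξ - ε * g ξ)) (h₀ (ξ - ε * g' ξ)) ≤ K * dist (g ξ) (g' ξ) := by
        calc dist (h₀ (ξ - ε * g ξ)) (h₀ (ξ - ε * g' ξ))
            ≤ (K / |ε|) * dist (ξ - ε * g ξ) (ξ - ε * g' ξ) := hlip.dist_le_mul _ _
          _ = (K / |ε|) * (|ε| * dist (g ξ) (g' ξ)) := by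
              have h3 : (ξ - ε * g ξ) - (ξ - ε * g' ξ) = ε * (g' ξ - g ξ) := by ring
              rw [Real.dist_eq, h3, abs_mul, Real.dist_eq, abs_sub_comm]
          _ = K * dist (g ξ) (g' ξ) := by
              field_simp
      refine key.trans ?_
      have hd : dist (g ξ) (g' ξ) ≤ dist g g' := by
        rw [← ZeroAtInftyContinuousMap.dist_toBCF_eq_dist]
        exact BoundedContinuousFunction.dist_coe_le_dist (f := g.toBCF) (g := g'.toBCF) ξ
      exact mul_le_mul_of_nonneg_left hd hK0
    have hcontract : ContractingWith ⟨K, hK0⟩ T := ⟨hKnn, hTlip⟩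
    set g₀ := hcontract.fixedPoint T with hg₀
    have hfix : T g₀ = g₀ := hcontract.fixedPoint_isFixedPt
    refine ⟨g₀, ⟨g₀.continuous, g₀.zero_at_infty', fun ξ => ?_⟩, ?_⟩
    · exact congrFun (congrArg (DFunLike.coe) hfix) ξ
    · rintro g ⟨hgc, hgv, hgfix⟩
      set G : ZeroAtInftyContinuousMap ℝ ℝ := ⟨⟨g, hgc⟩, hgv⟩ with hG
      have : G = g₀ := by
        apply hcontract.fixedPoint_unique
        ext ξ
        exact hgfix ξ
      exact congrArg (DFunLike.coe) this
end

section
/- Let g : ℝ → ℝ be C¹ and integrable with ‖ε g'‖_{L∞} ≤ 1/2, and define h(x) = g(ξ) via the change of variables x = ξ - ε g(ξ). Then ∫_ℝ h(x)² dx = ∫_ℝ g(ξ)² dξ. In particular ‖h‖_{L²} = ‖g‖_{L²}. -/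
open MeasureTheory

theorem L2_norm_invariance (ε : ℝ) (g h : ℝ → ℝ)
    (hg : ContDiff ℝ 1 g) (hint : Integrable g)
    (hsmall : ∀ ξ : ℝ, |ε * deriv g ξ| ≤ 1 / 2)
    (hdef : ∀ ξ : ℝ, h (ξ - ε * g ξ) = g ξ) :
    ∫ x : ℝ, (h x) ^ 2 = ∫ ξ : ℝ, (g ξ) ^ 2 := by
  rcases eq_or_ne ε 0 with hε | hε
  · have heq : ∀ ξ : ℝ, h ξ = g ξ := fun ξ => by simpa [hε] using hdef ξ
    simp only [heq]
  -- general setup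
  have hgd : Differentiable ℝ g := hg.differentiable one_ne_zero
  have hgc : Continuous g := hgd.continuous
  have hg'c : Continuous (deriv g) := hg.continuous_deriv le_rfl
  have hεpos : (0:ℝ) < |ε| := abs_pos.mpr hε
  set K : ℝ := 1 / (2 * |ε|) with hKdef
  have hKpos : 0 < K := by positivity
  -- the derivative bound gives a Lipschitz bound
  have hKbound : ∀ x, |deriv g x| ≤ K := by
    intro x
    have h1 := hsmall x
    rw [abs_mul] at h1
    rw [hKdef, le_div_iff₀ (by positivity)]
    nlinarith [abs_nonneg (deriv g x)]
  have hLip : LipschitzWith ⟨K, hKpos.le⟩ g := by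
    apply lipschitzWith_of_nnnorm_deriv_le hgd
    intro x
    change (‖deriv g x‖₊ : ℝ) ≤ K
    simpa using hKbound x
  have hLip' : ∀ x y : ℝ, |g x - g y| ≤ K * |x - y| := by
    intro x y
    have := hLip.dist_le_mul x y
    rw [Real.dist_eq, Real.dist_eq] at this; exact this
  -- boundedness of g
  set I : ℝ := ∫ x : ℝ, |g x| with hIdef
  have hInn : 0 ≤ I := integral_nonneg fun x => abs_nonneg _
  have hsq : ∀ x : ℝ, |g x| ^ 2 ≤ 4 * K * I := by
    intro x
    set r : ℝ := |g x| / (2 * K) with hrdef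
    have hr0 : 0 ≤ r := by positivity
    have hKr : K * r = |g x| / 2 := by
      rw [hrdef, mul_div_assoc', div_eq_div_iff (by positivity) (by norm_num)]
      ring
    have hlow : ∀ y ∈ Set.Icc x (x + r), |g x| / 2 ≤ |g y| := by
      intro y hy
      have h1 : |g x - g y| ≤ K * |x - y| := hLip' x y
      have h2 : |x - y| ≤ r := by
        rw [abs_sub_comm, abs_of_nonneg (by linarith [hy.1])]
        linarith [hy.2]
      have h3 : |g x| - |g y| ≤ K * r := by
        have := abs_sub_abs_le_abs_sub (g x) (g y)
        nlinarith
      linarith [h3, hKr.le, hKr.ge]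
    have hvol : (volume (Set.Icc x (x + r))).toReal = r := by
      simp [Real.volume_Icc, hr0]
    have hmain : (|g x| / 2) * r ≤ I := by
      calc (|g x| / 2) * r = (|g x| / 2) * (volume (Set.Icc x (x + r))).toReal := by
            rw [hvol]
        _ ≤ ∫ y in Set.Icc x (x + r), |g y| :=
            (le_of_eq (by rw [smul_eq_mul, mul_comm]; rfl)).trans
            (setIntegral_ge_of_const_le measurableSet_Icc (by simp [Real.volume_Icc])
              hlow (hint.abs.integrableOn))
        _ ≤ I := setIntegral_le_integral hint.abs
            (Filter.Eventually.of_forall fun y => abs_nonneg _)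
    have : |g x| ^ 2 / (4 * K) ≤ I := by
      have : (|g x| / 2) * r = |g x| ^ 2 / (4 * K) := by
        rw [hrdef]; field_simp; ring
      linarith [hmain, this.le, this.ge]
    calc |g x| ^ 2 = |g x| ^ 2 / (4 * K) * (4 * K) := by field_simp
      _ ≤ I * (4 * K) := by nlinarith
      _ = 4 * K * I := by ring
  set C : ℝ := Real.sqrt (4 * K * I) with hCdef
  have hC0 : 0 ≤ C := Real.sqrt_nonneg _
  have hbd : ∀ x, |g x| ≤ C := by
    intro x
    rw [hCdef]
    have := Real.sqrt_le_sqrt (hsq x)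
    rwa [Real.sqrt_sq (abs_nonneg _)] at this
  -- integrability facts
  have hg2 : Integrable (fun x => g x ^ 2) := by
    apply Integrable.mono' (hint.abs.const_mul C)
      ((hgc.pow 2).aestronglyMeasurable)
    refine Filter.Eventually.of_forall fun x => ?_
    have : ‖g x ^ 2‖ = |g x| * |g x| := by
      rw [Real.norm_eq_abs, sq, abs_mul]
    show ‖g x ^ 2‖ ≤ _; rw [this]
    exact mul_le_mul_of_nonneg_right (hbd x) (abs_nonneg _)
  have hg3 : Integrable (fun x => g x ^ 3) := by
    apply Integrable.mono' (hint.abs.const_mul (C * C))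
      ((hgc.pow 3).aestronglyMeasurable)
    refine Filter.Eventually.of_forall fun x => ?_
    have : ‖g x ^ 3‖ = |g x| * |g x| * |g x| := by
      rw [Real.norm_eq_abs, pow_succ, sq, abs_mul, abs_mul]
    show ‖g x ^ 3‖ ≤ _; rw [this]
    have h1 : |g x| * |g x| ≤ C * C :=
      mul_le_mul (hbd x) (hbd x) (abs_nonneg _) hC0
    exact mul_le_mul_of_nonneg_right h1 (abs_nonneg _)
  have hF'int : Integrable (fun x => ε * deriv g x * g x ^ 2) := by
    apply Integrable.mono' (hg2.const_mul (1/2))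
      (((continuous_const.mul hg'c).mul (hgc.pow 2)).aestronglyMeasurable)
    refine Filter.Eventually.of_forall fun x => ?_
    have h1 : ‖ε * deriv g x * g x ^ 2‖ = |ε * deriv g x| * (g x ^ 2) := by
      rw [Real.norm_eq_abs, abs_mul, abs_pow, sq_abs]
    show ‖ε * deriv g x * g x ^ 2‖ ≤ _; rw [h1]
    exact mul_le_mul_of_nonneg_right (hsmall x) (sq_nonneg _)
  -- FTC: the integral of ε g' g² vanishes
  have hzero : ∫ x : ℝ, ε * deriv g x * g x ^ 2 = 0 := by
    have hderivF : ∀ x : ℝ, HasDerivAt (fun y => ε / 3 * g y ^ 3)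
        (ε * deriv g x * g x ^ 2) x := by
      intro x
      have h1 : HasDerivAt (fun y => g y ^ 3) (3 * g x ^ 2 * deriv g x) x := by
        simpa using ((hgd x).hasDerivAt.fun_pow 3)
      have h2 := h1.const_mul (ε / 3)
      refine h2.congr_deriv ?_
      ring
    exact integral_eq_zero_of_hasDerivAt_of_integrable hderivF hF'int
      (hg3.const_mul (ε / 3))
  -- the change of variables map
  set φ : ℝ → ℝ := fun ξ => ξ - ε * g ξ with hφdef
  have hφd : ∀ ξ : ℝ, HasDerivAt φ (1 - ε * deriv g ξ) ξ := fun ξ =>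
    (hasDerivAt_id ξ).sub ((hgd ξ).hasDerivAt.const_mul ε)
  have hφ'pos : ∀ ξ : ℝ, (0:ℝ) < 1 - ε * deriv g ξ := by
    intro ξ
    have := (le_abs_self (ε * deriv g ξ)).trans (hsmall ξ)
    linarith
  have hmono : StrictMono φ := by
    apply strictMono_of_deriv_pos
    intro ξ
    rw [(hφd ξ).deriv]
    exact hφ'pos ξ
  have hφc : Continuous φ := continuous_id.sub (continuous_const.mul hgc)
  have hgrow : ∀ ξ : ℝ, |ε * g ξ - ε * g 0| ≤ |ξ| / 2 := by
    intro ξ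
    have h1 : |ε * g ξ - ε * g 0| = |ε| * |g ξ - g 0| := by
      rw [← abs_mul]; ring_nf
    rw [h1]
    have h2 := hLip' ξ 0
    have h3 : |ε| * |g ξ - g 0| ≤ |ε| * (K * |ξ - 0|) :=
      mul_le_mul_of_nonneg_left h2 (abs_nonneg _)
    have h4 : |ε| * (K * |ξ - 0|) = |ξ| / 2 := by
      rw [hKdef]; field_simp; ring
    linarith [h4 ▸ h3]
  have htop : Filter.Tendsto φ Filter.atTop Filter.atTop := by
    apply Filter.tendsto_atTop_mono' _ _
      (Filter.tendsto_atTop_add_const_right _ (-(ε * g 0) - |ε * g 0|)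
        (Filter.tendsto_id.atTop_mul_const (show (0:ℝ) < 1/2 by norm_num)))
    filter_upwards [Filter.eventually_ge_atTop (0:ℝ)] with ξ hξ
    have h1 := hgrow ξ
    have h2 : ε * g ξ ≤ ε * g 0 + |ξ| / 2 := by
      have := le_abs_self (ε * g ξ - ε * g 0)
      linarith
    have h3 : |ξ| = ξ := abs_of_nonneg hξ
    have h4 : -(ε * g 0) - |ε * g 0| ≤ -(ε * g 0) := by
      have := abs_nonneg (ε * g 0); linarith
    simp only [hφdef, id_eq]
    rw [h3] at h2
    linarith
  have hbot : Filter.Tendsto φ Filter.atBot Filter.atBot := by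
    apply Filter.tendsto_atBot_mono' _ _
      (Filter.tendsto_atBot_add_const_right _ (-(ε * g 0) + |ε * g 0|)
        (Filter.tendsto_id.atBot_mul_const (show (0:ℝ) < 1/2 by norm_num)))
    filter_upwards [Filter.eventually_le_atBot (0:ℝ)] with ξ hξ
    have h1 := hgrow ξ
    have h2 : ε * g 0 - |ξ| / 2 ≤ ε * g ξ := by
      have := neg_abs_le (ε * g ξ - ε * g 0)
      linarith
    have h3 : |ξ| = -ξ := abs_of_nonpos hξ
    have h4 : -(ε * g 0) ≤ -(ε * g 0) + |ε * g 0| := by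
      have := abs_nonneg (ε * g 0); linarith
    simp only [hφdef, id_eq]
    rw [h3] at h2
    linarith
  have hsurj : Function.Surjective φ := hφc.surjective htop hbot
  -- change of variables
  have hcov := integral_image_eq_integral_abs_deriv_smul (s := Set.univ) (f := φ)
    (f' := fun ξ => 1 - ε * deriv g ξ) MeasurableSet.univ
    (fun x _ => (hφd x).hasDerivWithinAt) (hmono.injective.injOn) (fun x => h x ^ 2)
  rw [Set.image_univ, hsurj.range_eq] at hcov
  rw [setIntegral_univ, setIntegral_univ] at hcov
  rw [hcov]
  have heq : ∀ ξ : ℝ, |1 - ε * deriv g ξ| • (h (φ ξ)) ^ 2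
      = g ξ ^ 2 - ε * deriv g ξ * g ξ ^ 2 := by
    intro ξ
    rw [abs_of_pos (hφ'pos ξ), hφdef]
    simp only [hdef ξ, smul_eq_mul]
    ring
  simp only [heq]
  rw [integral_sub hg2 hF'int, hzero, sub_zero]
end

section
/- For every g in the Sobolev space H²(ℝ), ‖g'‖_{L∞} ≤ √(8/3) · ‖g‖_{L²}^{1/4} · ‖g''‖_{L²}^{3/4}. -/
open MeasureTheory Filter Set

private lemma abs_mul_le_half (a b : ℝ) : |a * b| ≤ (a ^ 2 + b ^ 2) / 2 := by
  rw [abs_mul]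
  nlinarith [sq_nonneg (|a| - |b|), sq_abs a, sq_abs b, abs_nonneg a, abs_nonneg b]

private lemma integrable_mul_of_sq {f h : ℝ → ℝ} (hf : Continuous f) (hh : Continuous h)
    (hf2 : Integrable (fun x => f x ^ 2)) (hh2 : Integrable (fun x => h x ^ 2)) :
    Integrable (fun x => f x * h x) := by
  refine Integrable.mono' ((hf2.add hh2).div_const 2) (hf.mul hh).aestronglyMeasurable ?_
  filter_upwards with x
  rw [Real.norm_eq_abs]
  exact abs_mul_le_half (f x) (h x)

/-- Cauchy–Schwarz for integrals of continuous functions. -/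
private lemma cauchy_schwarz_int {f h : ℝ → ℝ} (hf : Continuous f) (hh : Continuous h)
    (hf2 : Integrable (fun x => f x ^ 2)) (hh2 : Integrable (fun x => h x ^ 2)) :
    ∫ x, |f x * h x| ≤ Real.sqrt (∫ x, f x ^ 2) * Real.sqrt (∫ x, h x ^ 2) := by
  have hfm : MemLp f 2 (volume : Measure ℝ) :=
    (memLp_two_iff_integrable_sq hf.aestronglyMeasurable).2 hf2
  have hhm : MemLp h 2 (volume : Measure ℝ) :=
    (memLp_two_iff_integrable_sq hh.aestronglyMeasurable).2 hh2
  have hconj : Real.HolderConjugate 2 2 := Real.holderConjugate_iff.mpr ⟨one_lt_two, by norm_num⟩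
  have h2 : ENNReal.ofReal (2 : ℝ) = 2 := by simp
  have key := integral_mul_norm_le_Lp_mul_Lq (μ := (volume : Measure ℝ)) hconj
    (h2 ▸ hfm) (h2 ▸ hhm)
  have e1 : ∀ (u : ℝ → ℝ), (fun a => ‖u a‖ ^ (2:ℝ)) = fun a => u a ^ 2 := by
    intro u; funext a
    rw [show (2:ℝ) = ((2:ℕ):ℝ) by norm_num, Real.rpow_natCast, Real.norm_eq_abs, sq_abs]
  rw [e1 f, e1 h] at key
  calc ∫ x, |f x * h x| = ∫ x, ‖f x‖ * ‖h x‖ := by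
        simp_rw [Real.norm_eq_abs, abs_mul]
    _ ≤ (∫ a, f a ^ 2) ^ ((1:ℝ)/2) * (∫ a, h a ^ 2) ^ ((1:ℝ)/2) := key
    _ = Real.sqrt (∫ x, f x ^ 2) * Real.sqrt (∫ x, h x ^ 2) := by
        rw [Real.sqrt_eq_rpow, Real.sqrt_eq_rpow]

/-- An integrable function with integrable derivative tends to 0 at +∞. -/
private lemma tendsto_zero_atTop_of_integrable {f f' : ℝ → ℝ}
    (hderiv : ∀ x, HasDerivAt f (f' x) x) (hf' : Integrable f') (hf : Integrable f) :
    Tendsto f atTop (nhds 0) := by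
  have A : Tendsto f atTop (nhds (limUnder atTop f)) :=
    tendsto_limUnder_of_hasDerivAt_of_integrableOn_Ioi (a := 0)
      (fun x _ => hderiv x) hf'.integrableOn
  have B : limUnder atTop f = 0 := by
    have hI : IntegrableAtFilter f atTop (volume : Measure ℝ) :=
      ⟨Ioi 0, Ioi_mem_atTop _, hf.integrableOn⟩
    refine hI.eq_zero_of_tendsto ?_ A
    intro s hs
    rcases mem_atTop_sets.1 hs with ⟨b, hb⟩
    rw [← top_le_iff, ← Real.volume_Ici (a := b)]
    exact measure_mono hb
  rwa [B] at A

theorem gagliardo_nirenberg_moser (g : ℝ → ℝ)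
    (hg : ContDiff ℝ 2 g)
    (hgL2 : Integrable (fun x => (g x) ^ 2))
    (hg'L2 : Integrable (fun x => (deriv g x) ^ 2))
    (hg''L2 : Integrable (fun x => (deriv (deriv g) x) ^ 2)) :
    ∀ x : ℝ, |deriv g x| ≤
      Real.sqrt (8 / 3) * (Real.sqrt (∫ t : ℝ, (g t) ^ 2)) ^ ((1 : ℝ) / 4) *
        (Real.sqrt (∫ t : ℝ, (deriv (deriv g) t) ^ 2)) ^ ((3 : ℝ) / 4) := by
  intro x
  -- basic differentiability/continuity facts
  have hg2 : ContDiff ℝ 1 (deriv g) := by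
    rw [show (2 : WithTop ℕ∞) = 1 + 1 from rfl, contDiff_succ_iff_deriv] at hg
    exact hg.2.2
  have hgdiff : Differentiable ℝ g := (hg.differentiable (by norm_num))
  have hg'diff : Differentiable ℝ (deriv g) := hg2.differentiable one_ne_zero
  have cg : Continuous g := hgdiff.continuous
  have cg' : Continuous (deriv g) := hg'diff.continuous
  have cg'' : Continuous (deriv (deriv g)) := (contDiff_one_iff_deriv.mp hg2).2
  have hd : ∀ y, HasDerivAt g (deriv g y) y := fun y => (hgdiff y).hasDerivAt
  have hd' : ∀ y, HasDerivAt (deriv g) (deriv (deriv g) y) y := fun y => (hg'diff y).hasDerivAt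
  -- integrability of products
  have I_g'g'' : Integrable (fun y => deriv g y * deriv (deriv g) y) :=
    integrable_mul_of_sq cg' cg'' hg'L2 hg''L2
  have I_gg'' : Integrable (fun y => g y * deriv (deriv g) y) :=
    integrable_mul_of_sq cg cg'' hgL2 hg''L2
  have I_gg' : Integrable (fun y => g y * deriv g y) :=
    integrable_mul_of_sq cg cg' hgL2 hg'L2
  -- abbreviations
  set a := Real.sqrt (∫ t : ℝ, (g t) ^ 2) with ha
  set b := Real.sqrt (∫ t : ℝ, (deriv g t) ^ 2) with hb
  set c := Real.sqrt (∫ t : ℝ, (deriv (deriv g) t) ^ 2) with hc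
  have ha0 : 0 ≤ a := Real.sqrt_nonneg _
  have hb0 : 0 ≤ b := Real.sqrt_nonneg _
  have hc0 : 0 ≤ c := Real.sqrt_nonneg _
  have hIg : 0 ≤ ∫ t : ℝ, (g t) ^ 2 := integral_nonneg fun t => sq_nonneg _
  have hIg' : 0 ≤ ∫ t : ℝ, (deriv g t) ^ 2 := integral_nonneg fun t => sq_nonneg _
  have hIg'' : 0 ≤ ∫ t : ℝ, (deriv (deriv g) t) ^ 2 := integral_nonneg fun t => sq_nonneg _
  have hb2 : b ^ 2 = ∫ t : ℝ, (deriv g t) ^ 2 := Real.sq_sqrt hIg'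
  have hc2 : c ^ 2 = ∫ t : ℝ, (deriv (deriv g) t) ^ 2 := Real.sq_sqrt hIg''
  -- Step 1: ∫ g'^2 ≤ a * c  (integration by parts + Cauchy–Schwarz)
  have parts : (∫ y, (deriv g y ^ 2 + g y * deriv (deriv g) y)) = 0 := by
    apply integral_eq_zero_of_hasDerivAt_of_integrable
      (f := fun y => g y * deriv g y)
    · intro y
      have := (hd y).mul (hd' y)
      exact this.congr_deriv (by ring)
    · exact hg'L2.add I_gg''
    · exact I_gg'
  have step1 : b ^ 2 ≤ a * c := by
    have hsplit : (∫ y, (deriv g y ^ 2 + g y * deriv (deriv g) y))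
        = (∫ y, deriv g y ^ 2) + ∫ y, g y * deriv (deriv g) y :=
      integral_add hg'L2 I_gg''
    have h1 : (∫ y, deriv g y ^ 2) = - ∫ y, g y * deriv (deriv g) y := by
      rw [hsplit] at parts; linarith
    have h2 : - (∫ y, g y * deriv (deriv g) y) ≤ ∫ y, |g y * deriv (deriv g) y| := by
      calc - (∫ y, g y * deriv (deriv g) y) ≤ |∫ y, g y * deriv (deriv g) y| := neg_le_abs _
        _ ≤ ∫ y, |g y * deriv (deriv g) y| := by
            have := norm_integral_le_integral_norm
              (μ := (volume : Measure ℝ)) (f := fun y => g y * deriv (deriv g) y)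
            simp only [Real.norm_eq_abs] at this
            exact this
    have h3 := cauchy_schwarz_int cg cg'' hgL2 hg''L2
    rw [hb2, h1]
    exact h2.trans h3
  -- Step 2: (g' x)^2 ≤ 2 * (b * c)
  have hderiv_sq : ∀ y, HasDerivAt (fun t => deriv g t ^ 2)
      (2 * (deriv g y * deriv (deriv g) y)) y := by
    intro y
    have := (hd' y).pow 2
    exact this.congr_deriv (by ring)
  have I2 : Integrable (fun y => 2 * (deriv g y * deriv (deriv g) y)) := I_g'g''.const_mul 2
  have hlim : Tendsto (fun t => deriv g t ^ 2) atTop (nhds 0) :=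
    tendsto_zero_atTop_of_integrable hderiv_sq I2 hg'L2
  have ftc : (∫ t in Ioi x, 2 * (deriv g t * deriv (deriv g) t)) = 0 - deriv g x ^ 2 :=
    integral_Ioi_of_hasDerivAt_of_tendsto' (fun y _ => hderiv_sq y) I2.integrableOn hlim
  have step2 : deriv g x ^ 2 ≤ 2 * (b * c) := by
    have e1 : deriv g x ^ 2 = - ∫ t in Ioi x, 2 * (deriv g t * deriv (deriv g) t) := by
      rw [ftc]; ring
    have e2 : - (∫ t in Ioi x, 2 * (deriv g t * deriv (deriv g) t))
        ≤ ∫ t in Ioi x, |2 * (deriv g t * deriv (deriv g) t)| := by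
      calc - (∫ t in Ioi x, 2 * (deriv g t * deriv (deriv g) t))
          ≤ |∫ t in Ioi x, 2 * (deriv g t * deriv (deriv g) t)| := neg_le_abs _
        _ ≤ ∫ t in Ioi x, |2 * (deriv g t * deriv (deriv g) t)| := by
            have := norm_integral_le_integral_norm
              (μ := (volume : Measure ℝ).restrict (Ioi x))
              (f := fun t => 2 * (deriv g t * deriv (deriv g) t))
            simp only [Real.norm_eq_abs] at this
            exact this
    have e3 : (∫ t in Ioi x, |2 * (deriv g t * deriv (deriv g) t)|)
        ≤ ∫ t, |2 * (deriv g t * deriv (deriv g) t)| := by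
      apply setIntegral_le_integral (I2.abs)
      filter_upwards with t using abs_nonneg _
    have e4 : (∫ t, |2 * (deriv g t * deriv (deriv g) t)|)
        = 2 * ∫ t, |deriv g t * deriv (deriv g) t| := by
      rw [← integral_const_mul]
      congr 1; funext t
      rw [abs_mul, abs_of_nonneg (by norm_num : (0:ℝ) ≤ 2)]
    have e5 := cauchy_schwarz_int cg' cg'' hg'L2 hg''L2
    calc deriv g x ^ 2 = - ∫ t in Ioi x, 2 * (deriv g t * deriv (deriv g) t) := e1
      _ ≤ ∫ t in Ioi x, |2 * (deriv g t * deriv (deriv g) t)| := e2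
      _ ≤ ∫ t, |2 * (deriv g t * deriv (deriv g) t)| := e3
      _ = 2 * ∫ t, |deriv g t * deriv (deriv g) t| := e4
      _ ≤ 2 * (b * c) := by
          apply mul_le_mul_of_nonneg_left _ (by norm_num : (0:ℝ) ≤ 2)
          exact e5
  -- combine: (g' x)^2 ≤ 2 * a^(1/2) * c^(3/2)
  have hble : b ≤ a ^ ((1:ℝ)/2) * c ^ ((1:ℝ)/2) := by
    have : b = Real.sqrt (b ^ 2) := (Real.sqrt_sq hb0).symm
    rw [this]
    calc Real.sqrt (b ^ 2) ≤ Real.sqrt (a * c) := Real.sqrt_le_sqrt step1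
      _ = Real.sqrt a * Real.sqrt c := Real.sqrt_mul ha0 c
      _ = a ^ ((1:ℝ)/2) * c ^ ((1:ℝ)/2) := by rw [Real.sqrt_eq_rpow, Real.sqrt_eq_rpow]
  have key : deriv g x ^ 2 ≤ 2 * (a ^ ((1:ℝ)/2) * c ^ ((3:ℝ)/2)) := by
    have h1 : deriv g x ^ 2 ≤ 2 * ((a ^ ((1:ℝ)/2) * c ^ ((1:ℝ)/2)) * c) := by
      refine step2.trans ?_
      apply mul_le_mul_of_nonneg_left _ (by norm_num : (0:ℝ) ≤ 2)
      exact mul_le_mul_of_nonneg_right hble hc0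
    have h2 : (a ^ ((1:ℝ)/2) * c ^ ((1:ℝ)/2)) * c = a ^ ((1:ℝ)/2) * c ^ ((3:ℝ)/2) := by
      rw [mul_assoc]
      congr 1
      rw [show ((3:ℝ)/2) = (1:ℝ)/2 + 1 by norm_num,
        Real.rpow_add_of_nonneg hc0 (by norm_num) (by norm_num), Real.rpow_one]
    rwa [h2] at h1
  -- finish: compare squares
  have hRHS0 : 0 ≤ Real.sqrt (8/3) * a ^ ((1:ℝ)/4) * c ^ ((3:ℝ)/4) := by
    apply mul_nonneg (mul_nonneg (Real.sqrt_nonneg _) (Real.rpow_nonneg ha0 _))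
      (Real.rpow_nonneg hc0 _)
  have hsq : (Real.sqrt (8/3) * a ^ ((1:ℝ)/4) * c ^ ((3:ℝ)/4)) ^ 2
      = (8/3) * (a ^ ((1:ℝ)/2) * c ^ ((3:ℝ)/2)) := by
    have e1 : (a ^ ((1:ℝ)/4)) ^ 2 = a ^ ((1:ℝ)/2) := by
      rw [← Real.rpow_natCast (a ^ ((1:ℝ)/4)) 2, ← Real.rpow_mul ha0]
      norm_num
    have e2 : (c ^ ((3:ℝ)/4)) ^ 2 = c ^ ((3:ℝ)/2) := by
      rw [← Real.rpow_natCast (c ^ ((3:ℝ)/4)) 2, ← Real.rpow_mul hc0]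
      norm_num
    have e3 : Real.sqrt (8/3) ^ 2 = 8/3 := Real.sq_sqrt (by norm_num)
    rw [mul_pow, mul_pow, e1, e2, e3]
    ring
  have final : deriv g x ^ 2 ≤ (Real.sqrt (8/3) * a ^ ((1:ℝ)/4) * c ^ ((3:ℝ)/4)) ^ 2 := by
    rw [hsq]
    refine key.trans ?_
    apply mul_le_mul_of_nonneg_right (by norm_num)
      (mul_nonneg (Real.rpow_nonneg ha0 _) (Real.rpow_nonneg hc0 _))
  calc |deriv g x| = Real.sqrt (deriv g x ^ 2) := (Real.sqrt_sq_eq_abs _).symm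
    _ ≤ Real.sqrt ((Real.sqrt (8/3) * a ^ ((1:ℝ)/4) * c ^ ((3:ℝ)/4)) ^ 2) :=
        Real.sqrt_le_sqrt final
    _ = Real.sqrt (8/3) * a ^ ((1:ℝ)/4) * c ^ ((3:ℝ)/4) := Real.sqrt_sq hRHS0
end
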